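/- Let n ≥ 3 and 1 ≤ k ≤ n−2. Let f_1,…,f_m ∈ ℝ[x_1,…,x_n] be polynomials each belonging to the ℝ-subalgebra generated by the even power sums s_2, s_4, …, s_{2k}. If the real variety X = {x ∈ ℝ^n : f_1(x) = ⋯ = f_m(x) = 0} is nonempty, then X contains a point of H_k(D_n), i.e. there exists x ∈ X such that either x has exactly one zero coordinate and its nonzero coordinates take at most k−1 distinct absolute values, or x does not have exactly one zero coordinate and its nonzero coordinates take at most k distinct absolute values. -/

import Mathlib

open MvPolynomial

section Aux

open Matrix in

lemma det_sv {m : ℕ} (a : Fin m → ℝ) (ha : Function.Injective a) :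
    (Matrix.of fun i l : Fin m => (((i : ℕ) + 1 : ℕ) : ℝ) * a l ^ (i : ℕ)).det ≠ 0 := by
  have h : (Matrix.of fun i l : Fin m => (((i : ℕ) + 1 : ℕ) : ℝ) * a l ^ (i : ℕ))
      = Matrix.diagonal (fun i : Fin m => (((i : ℕ) + 1 : ℕ) : ℝ)) * (Matrix.vandermonde a)ᵀ := by
    ext i l
    rw [Matrix.diagonal_mul]
    simp [Matrix.vandermonde, Matrix.transpose_apply]
  rw [h, Matrix.det_mul, Matrix.det_diagonal, Matrix.det_transpose, Matrix.det_vandermonde]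
  apply mul_ne_zero
  · exact Finset.prod_ne_zero_iff.2 fun i _ => by positivity
  · refine Finset.prod_ne_zero_iff.2 fun i _ => Finset.prod_ne_zero_iff.2 fun j hj => ?_
    have hij : i < j := Finset.mem_Ioi.1 hj
    exact sub_ne_zero_of_ne fun e => hij.ne' (ha e)

lemma interp {k : ℕ} (hk : 1 ≤ k) (a v : Fin k → ℝ)
    (hv : ∀ i : Fin k, ∑ l, a l ^ (i : ℕ) * v l = if (i : ℕ) = 0 then -1 else 0) :
    ∑ l, a l ^ k * v l = (-1) ^ k * ∏ l, a l := by
  classical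
  set q : Polynomial ℝ := ∏ l, (Polynomial.X - Polynomial.C (a l)) with hq
  have hqm : q.Monic := Polynomial.monic_prod_of_monic _ _ fun l _ => Polynomial.monic_X_sub_C _
  have hqdeg : q.natDegree = k := by
    rw [hq, Polynomial.natDegree_prod _ _ fun l _ => Polynomial.X_sub_C_ne_zero _]
    simp
  set r : Polynomial ℝ := Polynomial.X ^ k - q with hr
  have hrdeg : r.natDegree < k := by
    rcases eq_or_ne r 0 with h0 | h0
    · simpa [h0] using (show 0 < k by omega)
    · rw [Polynomial.natDegree_lt_iff_degree_lt h0]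
      have hd : (Polynomial.X ^ k - q).degree < (Polynomial.X ^ k : Polynomial ℝ).degree := by
        refine Polynomial.degree_sub_lt ?_ (pow_ne_zero _ Polynomial.X_ne_zero) ?_
        · rw [Polynomial.degree_X_pow, Polynomial.degree_eq_natDegree hqm.ne_zero, hqdeg]
        · rw [Polynomial.leadingCoeff_X_pow, hqm.leadingCoeff]
      rw [hr]
      simpa using hd
  have hrad : ∀ l, r.eval (a l) = a l ^ k := by
    intro l
    have h0 : q.eval (a l) = 0 := by
      rw [hq, Polynomial.eval_prod]
      exact Finset.prod_eq_zero (Finset.mem_univ l) (by simp)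
    simp [hr, h0]
  have key : ∑ l, a l ^ k * v l = ∑ l, r.eval (a l) * v l := by simp [hrad]
  rw [key]
  have heval : ∀ l, r.eval (a l) = ∑ i ∈ Finset.range k, r.coeff i * a l ^ i := fun l =>
    Polynomial.eval_eq_sum_range' hrdeg _
  have hq0 : q.coeff 0 = (-1) ^ k * ∏ l, a l := by
    rw [Polynomial.coeff_zero_eq_eval_zero, hq, Polynomial.eval_prod]
    simp only [Polynomial.eval_sub, Polynomial.eval_X, Polynomial.eval_C, zero_sub]
    have : ∀ l : Fin k, -a l = (-1) * a l := fun l => by ring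
    simp only [this]
    rw [Finset.prod_mul_distrib, Finset.prod_const]
    simp
  have hr0 : r.coeff 0 = -((-1) ^ k * ∏ l, a l) := by
    rw [hr, Polynomial.coeff_sub, Polynomial.coeff_X_pow, hq0]
    have : ¬(0 = k) := by omega
    simp [this]
  calc ∑ l, r.eval (a l) * v l
      = ∑ l, ∑ i ∈ Finset.range k, r.coeff i * (a l ^ i * v l) := by
        refine Finset.sum_congr rfl fun l _ => ?_
        rw [heval, Finset.sum_mul]
        exact Finset.sum_congr rfl fun i _ => by ring
    _ = ∑ i ∈ Finset.range k, r.coeff i * ∑ l, a l ^ i * v l := by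
        rw [Finset.sum_comm]
        exact Finset.sum_congr rfl fun i _ => by rw [Finset.mul_sum]
    _ = -r.coeff 0 := by
        rw [Finset.sum_eq_single 0]
        · have h0 := hv ⟨0, hk⟩
          simp only [pow_zero] at h0 ⊢
          simp only [show (((⟨0, hk⟩ : Fin k) : ℕ) = 0) from rfl, if_true] at h0
          rw [h0]; ring
        · intro i hi hi0
          have h0 := hv ⟨i, Finset.mem_range.1 hi⟩
          simp only [show (((⟨i, Finset.mem_range.1 hi⟩ : Fin k) : ℕ) = i) from rfl, hi0,
            if_false] at h0
          simp [h0]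
        · intro h; exact absurd (Finset.mem_range.2 hk) h
    _ = (-1) ^ k * ∏ l, a l := by rw [hr0]; ring

open Filter Topology

noncomputable def prj {m : ℕ} (l : Fin m) : (Fin m → ℝ) →L[ℝ] ℝ := ContinuousLinearMap.proj l

lemma hasStrict_powsum {m : ℕ} (p : ℕ) (b : Fin m → ℝ) :
    HasStrictFDerivAt (fun w : Fin m → ℝ => ∑ l, w l ^ p)
      (∑ l, ((p : ℝ) * b l ^ (p - 1)) • prj l) b := by
  apply HasStrictFDerivAt.fun_sum
  intro l _
  exact HasStrictDerivAt.comp_hasStrictFDerivAt (𝕜 := ℝ) b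
    (hasStrictDerivAt_pow p (b l)) (hasStrictFDerivAt_apply (𝕜 := ℝ) l b)

-- Lemma A
lemma perturbA {k : ℕ} (a : Fin (k + 1) → ℝ) (ha : Function.Injective a)
    (hpos : ∀ l, 0 < a l) :
    ∃ u : Fin (k + 1) → ℝ, (∀ l, 0 < u l) ∧
      (∀ i : Fin (k + 1), (i : ℕ) < k →
        ∑ l, u l ^ ((i : ℕ) + 1) = ∑ l, a l ^ ((i : ℕ) + 1)) ∧
      (-1 : ℝ) ^ (k + 1) * ∑ l, u l ^ (k + 1) < (-1 : ℝ) ^ (k + 1) * ∑ l, a l ^ (k + 1) := by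
  classical
  set Φ : (Fin (k + 1) → ℝ) → (Fin (k + 1) → ℝ) :=
    fun w i => ∑ l, w l ^ ((i : ℕ) + 1) with hΦdef
  set M : Matrix (Fin (k + 1)) (Fin (k + 1)) ℝ :=
    Matrix.of (fun i l : Fin (k + 1) => (((i : ℕ) + 1 : ℕ) : ℝ) * a l ^ (i : ℕ)) with hM
  have hdet : M.det ≠ 0 := det_sv a ha
  have hinv : Invertible M := M.invertibleOfIsUnitDet (isUnit_iff_ne_zero.2 hdet)
  set LE : (Fin (k + 1) → ℝ) ≃ₗ[ℝ] (Fin (k + 1) → ℝ) := M.toLinearEquiv' hinv with hLE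
  set CLE := LE.toContinuousLinearEquiv with hCLE
  have hCLEapp : ∀ v i, CLE v i = ∑ l, M i l * v l := by
    intro v i
    show LE v i = _
    rw [hLE]
    show Matrix.toLin' M v i = _
    rw [Matrix.toLin'_apply]
    simp [Matrix.mulVec, dotProduct]
  have hΦ : HasStrictFDerivAt Φ (CLE : (Fin (k+1) → ℝ) →L[ℝ] (Fin (k+1) → ℝ)) a := by
    apply hasStrictFDerivAt_pi'.2
    intro i
    have h1 := hasStrict_powsum ((i : ℕ) + 1) a
    refine h1.congr_fderiv (Eq.symm ?_)
    refine ContinuousLinearMap.ext fun v => ?_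
    simp only [prj, ContinuousLinearMap.coe_comp', Function.comp_apply,
      ContinuousLinearMap.proj_apply, ContinuousLinearMap.coe_sum',
      Finset.sum_apply, ContinuousLinearMap.coe_smul', Pi.smul_apply, smul_eq_mul]
    have : (CLE : (Fin (k+1) → ℝ) →L[ℝ] (Fin (k+1) → ℝ)) v i = CLE v i := rfl
    rw [this, hCLEapp]
    refine Finset.sum_congr rfl fun l _ => ?_
    simp [hM, mul_comm]
  set g := hΦ.localInverse Φ _ a with hg
  -- the target curve
  set η : ℝ → (Fin (k + 1) → ℝ) :=
    fun t => Function.update (Φ a) (Fin.last k) (Φ a (Fin.last k) + (-1 : ℝ) ^ k * t) with hη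
  have hη0 : η 0 = Φ a := by
    rw [hη]; simp
  have hηcont : ContinuousAt η 0 := by
    apply continuousAt_pi.2
    intro i
    rcases eq_or_ne i (Fin.last k) with rfl | hi
    · simp only [hη, Function.update_self]
      fun_prop
    · simp only [hη, Function.update_of_ne hi]
      fun_prop
  -- eventual facts
  have hev1 : ∀ᶠ t in 𝓝 (0 : ℝ), Φ (g (η t)) = η t := by
    have := hΦ.eventually_right_inverse
    rw [← hη0] at this
    exact hηcont.eventually this
  have hg0 : g (η 0) = a := by rw [hη0]; exact hΦ.localInverse_apply_image
  have hgcont : ContinuousAt (fun t => g (η t)) 0 := by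
    apply ContinuousAt.comp _ hηcont
    rw [hη0]
    exact hΦ.localInverse_continuousAt
  have hev2 : ∀ᶠ t in 𝓝 (0 : ℝ), ∀ l, 0 < g (η t) l := by
    have hU : IsOpen {w : Fin (k + 1) → ℝ | ∀ l, 0 < w l} := by
      have : {w : Fin (k + 1) → ℝ | ∀ l, 0 < w l} = ⋂ l, (fun w : Fin (k+1) → ℝ => w l) ⁻¹' Set.Ioi 0 := by
        ext w; simp
      rw [this]
      exact isOpen_iInter_of_finite fun l => (continuous_apply l).isOpen_preimage _ isOpen_Ioi
    have hmem : g (η 0) ∈ {w : Fin (k + 1) → ℝ | ∀ l, 0 < w l} := by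
      rw [hg0]; exact hpos
    exact hgcont (hU.mem_nhds hmem)
  have hh : ∀ᶠ t in 𝓝[>] (0 : ℝ), (Φ (g (η t)) = η t ∧ ∀ l, 0 < g (η t) l) ∧ 0 < t :=
    ((hev1.and hev2).filter_mono nhdsWithin_le_nhds).and self_mem_nhdsWithin
  obtain ⟨t, ⟨hrinv, hposu⟩, htpos⟩ := hh.exists
  refine ⟨g (η t), hposu, ?_, ?_⟩
  · intro i hik
    have hine : i ≠ Fin.last k := by
      intro h
      rw [h, Fin.val_last] at hik
      exact lt_irrefl _ hik
    have h2 := congrFun hrinv i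
    simp only [hη, Function.update_of_ne hine] at h2
    exact h2
  · have this := congrFun hrinv (Fin.last k)
    simp only [hη, Function.update_self] at this
    have hlast : ∀ w : Fin (k+1) → ℝ, Φ w (Fin.last k) = ∑ l, w l ^ (k + 1) := by
      intro w; simp [hΦdef, Fin.val_last]
    rw [hlast] at this
    rw [this]
    have hsign : (-1 : ℝ) ^ (k + 1) * ((-1 : ℝ) ^ k * t) = -t := by
      rw [← mul_assoc, ← pow_add]
      have : (-1 : ℝ) ^ (k + 1 + k) = -1 := by
        rw [show k + 1 + k = 2 * k + 1 by omega, pow_succ, pow_mul]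
        norm_num
      rw [this]; ring
    have hΦa : Φ a (Fin.last k) = ∑ l, a l ^ (k + 1) := hlast a
    rw [hΦa] at *
    rw [mul_add, hsign]
    have : 0 < t := htpos
    linarith

open Filter Topology

lemma eventually_lt_nhdsGT {N : ℝ → ℝ} {N' : ℝ} (h : HasDerivAt N N' 0) (hneg : N' < 0) :
    ∀ᶠ t in 𝓝[>] (0 : ℝ), N t < N 0 := by
  have hs := hasDerivAt_iff_tendsto_slope.1 h
  have h2 : 𝓝[>] (0 : ℝ) ≤ 𝓝[≠] (0 : ℝ) :=
    nhdsWithin_mono _ fun x hx => ne_of_gt hx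
  have h3 : ∀ᶠ t in 𝓝[>] (0 : ℝ), slope N 0 t < 0 :=
    (hs.mono_left h2).eventually_lt_const hneg
  filter_upwards [h3, self_mem_nhdsWithin] with t hslope (htpos : 0 < t)
  rw [slope_def_field] at hslope
  have := div_neg_iff.1 (by simpa using hslope)
  rcases this with ⟨h1', h2'⟩ | ⟨h1', h2'⟩
  · linarith
  · linarith

lemma perturbB {k : ℕ} (hk : 1 ≤ k) (a : Fin k → ℝ) (ha : Function.Injective a)
    (hpos : ∀ l, 0 < a l) :
    ∃ u : Fin (k + 1) → ℝ, (∀ l, 0 < u l) ∧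
      (∀ p : ℕ, 1 ≤ p → p ≤ k →
        ∑ l, u l ^ p = ∑ l, (Fin.cons 0 a : Fin (k + 1) → ℝ) l ^ p) ∧
      (-1 : ℝ) ^ (k + 1) * ∑ l, u l ^ (k + 1) <
        (-1 : ℝ) ^ (k + 1) * ∑ l, (Fin.cons 0 a : Fin (k + 1) → ℝ) l ^ (k + 1) := by
  classical
  set w : Fin (k + 1) → ℝ := Fin.cons 0 a with hw
  have hw0 : w 0 = 0 := rfl
  have hws : ∀ l : Fin k, w l.succ = a l := fun l => Fin.cons_succ _ _ _
  set Θ : (Fin (k + 1) → ℝ) → (Fin (k + 1) → ℝ) :=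
    fun x j => if j = 0 then x 0 else ∑ l, x l ^ (j : ℕ) with hΘdef
  set M : Matrix (Fin (k + 1)) (Fin (k + 1)) ℝ :=
    Matrix.of (fun j l : Fin (k + 1) =>
      if j = 0 then (if l = 0 then (1 : ℝ) else 0)
      else ((j : ℕ) : ℝ) * w l ^ ((j : ℕ) - 1)) with hM
  -- determinant nonzero
  have hsub : M.submatrix Fin.succ Fin.succ
      = Matrix.of (fun i l : Fin k => (((i : ℕ) + 1 : ℕ) : ℝ) * a l ^ (i : ℕ)) := by
    ext i l
    simp only [Matrix.submatrix_apply, hM, Matrix.of_apply, Fin.succ_ne_zero, if_false,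
      Fin.val_succ, hws]
    norm_num
  have hdet : M.det ≠ 0 := by
    rw [Matrix.det_succ_row_zero]
    rw [Finset.sum_eq_single 0]
    · have h00 : M 0 0 = 1 := by simp [hM]
      rw [h00]
      have : (0 : Fin (k + 1)).succAbove = Fin.succ := by
        funext i; exact Fin.zero_succAbove i
      rw [this, hsub]
      simpa using det_sv a ha
    · intro l _ hl
      have : M 0 l = 0 := by simp [hM, hl]
      simp [this]
    · simp
  have hinv : Invertible M := M.invertibleOfIsUnitDet (isUnit_iff_ne_zero.2 hdet)
  set LE : (Fin (k + 1) → ℝ) ≃ₗ[ℝ] (Fin (k + 1) → ℝ) := M.toLinearEquiv' hinv with hLE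
  set CLE := LE.toContinuousLinearEquiv with hCLE
  have hCLEapp : ∀ v j, CLE v j = ∑ l, M j l * v l := by
    intro v j
    show LE v j = _
    rw [hLE]
    show Matrix.toLin' M v j = _
    rw [Matrix.toLin'_apply]
    simp [Matrix.mulVec, dotProduct]
  -- strict derivative of Θ at w
  have hΘ : HasStrictFDerivAt Θ (CLE : (Fin (k+1) → ℝ) →L[ℝ] (Fin (k+1) → ℝ)) w := by
    apply hasStrictFDerivAt_pi'.2
    intro j
    rcases eq_or_ne j 0 with rfl | hj
    · have : (fun x : Fin (k + 1) → ℝ => Θ x 0) = fun x => x 0 := by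
        funext x; simp [hΘdef]
      rw [this]
      refine (hasStrictFDerivAt_apply (𝕜 := ℝ) (0 : Fin (k + 1)) w).congr_fderiv (Eq.symm ?_)
      refine ContinuousLinearMap.ext fun v => ?_
      simp only [ContinuousLinearMap.coe_comp', Function.comp_apply,
        ContinuousLinearMap.proj_apply]
      have : (CLE : (Fin (k+1) → ℝ) →L[ℝ] (Fin (k+1) → ℝ)) v 0 = CLE v 0 := rfl
      rw [this, hCLEapp]
      simp [hM, ite_mul, Finset.sum_ite_eq']
    · have heq : (fun x : Fin (k + 1) → ℝ => Θ x j) = fun x => ∑ l, x l ^ (j : ℕ) := by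
        funext x; simp [hΘdef, hj]
      rw [heq]
      refine (hasStrict_powsum (j : ℕ) w).congr_fderiv (Eq.symm ?_)
      refine ContinuousLinearMap.ext fun v => ?_
      simp only [ContinuousLinearMap.coe_comp', Function.comp_apply,
        ContinuousLinearMap.proj_apply, ContinuousLinearMap.coe_sum',
        Finset.sum_apply, ContinuousLinearMap.coe_smul', Pi.smul_apply, smul_eq_mul, prj,
        ContinuousLinearMap.proj_apply]
      have : (CLE : (Fin (k+1) → ℝ) →L[ℝ] (Fin (k+1) → ℝ)) v j = CLE v j := rfl
      rw [this, hCLEapp]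
      refine Finset.sum_congr rfl fun l _ => ?_
      simp [hM, hj, mul_comm]
  set g := hΘ.localInverse Θ _ w with hg
  -- the curve in target space
  set η : ℝ → (Fin (k + 1) → ℝ) := fun t j => if j = 0 then t else Θ w j with hη
  have hη0 : η 0 = Θ w := by
    funext j
    rcases eq_or_ne j 0 with rfl | hj
    · simp [hη, hΘdef, hw0]
    · simp [hη, hj]
  set e0 : Fin (k + 1) → ℝ := fun j => if j = 0 then 1 else 0 with he0
  have hηderiv : HasDerivAt η e0 0 := by
    apply hasDerivAt_pi.2
    intro j
    rcases eq_or_ne j 0 with rfl | hj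
    · simpa [hη, he0] using (hasDerivAt_id' (x := (0 : ℝ)))
    · simp only [hη, hj, if_false, he0]
      exact hasDerivAt_const _ _
  have hηcont : ContinuousAt η 0 := hηderiv.continuousAt
  -- the implicit curve
  set c : ℝ → (Fin (k + 1) → ℝ) := fun t => g (η t) with hc
  have hc0 : c 0 = w := by
    show g (η 0) = w
    rw [hη0]; exact hΘ.localInverse_apply_image
  set v : Fin (k + 1) → ℝ := CLE.symm e0 with hv
  have hcderiv : HasDerivAt c v 0 := by
    have h1 : HasFDerivAt g ((CLE.symm : (Fin (k+1) → ℝ) →L[ℝ] (Fin (k+1) → ℝ))) (η 0) := by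
      rw [hη0]
      exact hΘ.to_localInverse.hasFDerivAt
    exact h1.comp_hasDerivAt 0 hηderiv
  -- equations satisfied by v
  have hMv : ∀ j, ∑ l, M j l * v l = e0 j := by
    intro j
    rw [← hCLEapp]
    rw [hv, CLE.apply_symm_apply]
  have hv0 : v 0 = 1 := by
    have := hMv 0
    simpa [hM, ite_mul, Finset.sum_ite_eq', he0] using this
  have hveq : ∀ i : Fin k, ∑ l, a l ^ (i : ℕ) * v l.succ = if (i : ℕ) = 0 then -1 else 0 := by
    intro i
    have hj : (i.succ : Fin (k + 1)) ≠ 0 := Fin.succ_ne_zero i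
    have h1 := hMv i.succ
    rw [Fin.sum_univ_succ] at h1
    simp only [hM, Matrix.of_apply, hj, if_false, Fin.val_succ, he0] at h1
    -- h1 : (i+1) * w 0 ^ (i+1-1) * v 0 + ∑ l, (i+1) * w l.succ ^ (i+1-1) * v l.succ = 0
    have hsimp : (i : ℕ) + 1 - 1 = (i : ℕ) := by omega
    rw [hsimp] at h1
    rw [hw0, hv0] at h1
    have hz : (0 : ℝ) ^ (i : ℕ) = if (i : ℕ) = 0 then 1 else 0 := zero_pow_eq _
    have hcast : (((i : ℕ) + 1 : ℕ) : ℝ) ≠ 0 := by positivity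
    have h2 : ∑ l, a l ^ (i : ℕ) * v l.succ = -(0 : ℝ) ^ (i : ℕ) := by
      have h3 : (((i:ℕ)+1 : ℕ) : ℝ) * ((0:ℝ) ^ (i:ℕ) + ∑ l, a l ^ (i : ℕ) * v l.succ) = 0 := by
        have hsum : ∑ x : Fin k, (((i:ℕ)+1 : ℕ):ℝ) * w x.succ ^ (i:ℕ) * v x.succ
            = (((i:ℕ)+1 : ℕ):ℝ) * ∑ l, a l ^ (i:ℕ) * v l.succ := by
          rw [Finset.mul_sum]
          refine Finset.sum_congr rfl fun l _ => ?_
          rw [hws]; ring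
        rw [mul_add, ← hsum]
        linear_combination h1
      have h4 := (mul_eq_zero.1 h3).resolve_left hcast
      linarith
    rw [h2, hz]
    split <;> norm_num
  have hinterp : ∑ l, a l ^ k * v l.succ = (-1) ^ k * ∏ l, a l :=
    interp hk a (fun l => v l.succ) hveq
  -- objective function
  set G : (Fin (k + 1) → ℝ) → ℝ := fun x => (-1 : ℝ) ^ (k + 1) * ∑ l, x l ^ (k + 1) with hG
  have hGder : HasStrictFDerivAt G
      ((-1 : ℝ) ^ (k + 1) • ∑ l, (((k + 1 : ℕ) : ℝ) * w l ^ (k + 1 - 1)) • prj l) w := by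
    exact (hasStrict_powsum (k + 1) w).const_mul _
  set N : ℝ → ℝ := fun t => G (c t) with hN
  have hNderiv : HasDerivAt N
      (((-1 : ℝ) ^ (k + 1) • ∑ l, (((k + 1 : ℕ) : ℝ) * w l ^ (k + 1 - 1)) • prj l) v) 0 := by
    have h1 : HasFDerivAt G
        ((-1 : ℝ) ^ (k + 1) • ∑ l, (((k + 1 : ℕ) : ℝ) * w l ^ (k + 1 - 1)) • prj l) (c 0) := by
      rw [hc0]; exact hGder.hasFDerivAt
    exact h1.comp_hasDerivAt 0 hcderiv
  have hNval : (((-1 : ℝ) ^ (k + 1) • ∑ l, (((k + 1 : ℕ) : ℝ) * w l ^ (k + 1 - 1)) • prj l) v)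
      = -(((k + 1 : ℕ) : ℝ)) * ∏ l, a l := by
    have happ : (((-1 : ℝ) ^ (k + 1) • ∑ l, (((k + 1 : ℕ) : ℝ) * w l ^ (k + 1 - 1)) • prj l) v)
        = (-1 : ℝ) ^ (k + 1) * ∑ l : Fin (k + 1), ((k + 1 : ℕ) : ℝ) * w l ^ (k + 1 - 1) * v l := by
      simp [prj]
    rw [happ, Fin.sum_univ_succ]
    have hterm0 : ((k + 1 : ℕ) : ℝ) * w 0 ^ (k + 1 - 1) * v 0 = 0 := by
      rw [hw0, show k + 1 - 1 = k by omega, zero_pow (by omega : k ≠ 0)]; ring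
    have hsum : ∑ l : Fin k, ((k + 1 : ℕ) : ℝ) * w l.succ ^ (k + 1 - 1) * v l.succ
        = ((k + 1 : ℕ) : ℝ) * ((-1) ^ k * ∏ l, a l) := by
      rw [← hinterp, Finset.mul_sum]
      refine Finset.sum_congr rfl fun l _ => ?_
      rw [hws, show k + 1 - 1 = k by omega]; ring
    rw [hterm0, hsum]
    have hsgn : (-1 : ℝ) ^ (k + 1) * (-1 : ℝ) ^ k = -1 := by
      rw [← pow_add, show k + 1 + k = 2 * k + 1 by omega, pow_succ, pow_mul]
      norm_num
    linear_combination (((k + 1 : ℕ) : ℝ) * ∏ l, a l) * hsgn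
  have hNneg : (((-1 : ℝ) ^ (k + 1) • ∑ l, (((k + 1 : ℕ) : ℝ) * w l ^ (k + 1 - 1)) • prj l) v) < 0 := by
    rw [hNval]
    have : 0 < ∏ l, a l := Finset.prod_pos fun l _ => hpos l
    have hk2 : (0:ℝ) < ((k + 1 : ℕ) : ℝ) := by positivity
    nlinarith
  have hdecr : ∀ᶠ t in 𝓝[>] (0 : ℝ), N t < N 0 := eventually_lt_nhdsGT hNderiv hNneg
  -- eventual feasibility facts
  have hev1 : ∀ᶠ t in 𝓝 (0 : ℝ), Θ (c t) = η t := by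
    have := hΘ.eventually_right_inverse
    rw [← hη0] at this
    exact hηcont.eventually this
  have hccont : ContinuousAt c 0 := hcderiv.continuousAt
  have hev2 : ∀ᶠ t in 𝓝 (0 : ℝ), ∀ l : Fin k, 0 < c t l.succ := by
    have hU : IsOpen {x : Fin (k + 1) → ℝ | ∀ l : Fin k, 0 < x l.succ} := by
      have : {x : Fin (k + 1) → ℝ | ∀ l : Fin k, 0 < x l.succ}
          = ⋂ l : Fin k, (fun x : Fin (k+1) → ℝ => x l.succ) ⁻¹' Set.Ioi 0 := by
        ext x; simp
      rw [this]
      exact isOpen_iInter_of_finite fun l => (continuous_apply l.succ).isOpen_preimage _ isOpen_Ioi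
    have hmem : c 0 ∈ {x : Fin (k + 1) → ℝ | ∀ l : Fin k, 0 < x l.succ} := by
      rw [hc0]; intro l; rw [hws]; exact hpos l
    exact hccont (hU.mem_nhds hmem)
  have hh : ∀ᶠ t in 𝓝[>] (0 : ℝ),
      ((Θ (c t) = η t ∧ ∀ l : Fin k, 0 < c t l.succ) ∧ N t < N 0) ∧ 0 < t :=
    ((((hev1.and hev2).filter_mono nhdsWithin_le_nhds).and hdecr).and self_mem_nhdsWithin)
  obtain ⟨t, ⟨⟨hrinv, hsuccpos⟩, hNt⟩, htpos⟩ := hh.exists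
  refine ⟨c t, ?_, ?_, ?_⟩
  · -- positivity
    intro l
    rcases eq_or_ne l 0 with rfl | hl
    · have := congrFun hrinv 0
      simp only [hΘdef, hη, if_pos rfl] at this
      rw [this]; exact htpos
    · obtain ⟨i, rfl⟩ := Fin.exists_succ_eq.2 hl
      exact hsuccpos i
  · -- power sums 1..k preserved
    intro p hp1 hpk
    have hplt : p < k + 1 := by omega
    have hj0 : (⟨p, hplt⟩ : Fin (k + 1)) ≠ 0 := by
      intro hcon
      have := congrArg Fin.val hcon
      simp at this
      omega
    have h1 := congrFun hrinv ⟨p, hplt⟩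
    simp only [hΘdef, hη, hj0, if_false] at h1
    exact h1
  · -- objective decreased
    have hN0 : N 0 = (-1 : ℝ) ^ (k + 1) * ∑ l, w l ^ (k + 1) := by
      show G (c 0) = _
      rw [hc0]
    have hNt' : N t = (-1 : ℝ) ^ (k + 1) * ∑ l, c t l ^ (k + 1) := rfl
    rw [← hNt', ← hN0]
    exact hNt

noncomputable def patch {n m : ℕ} (y : Fin n → ℝ) (e : Fin m → Fin n) (u : Fin m → ℝ) :
    Fin n → ℝ :=
  fun j => if h : ∃ l, e l = j then u h.choose else y j

lemma patch_eq {n m : ℕ} (y : Fin n → ℝ) {e : Fin m → Fin n} (he : Function.Injective e)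
    (u : Fin m → ℝ) (l : Fin m) : patch y e u (e l) = u l := by
  have h : ∃ l', e l' = e l := ⟨l, rfl⟩
  simp only [patch, dif_pos h]
  congr 1
  exact he h.choose_spec

lemma patch_ne {n m : ℕ} (y : Fin n → ℝ) (e : Fin m → Fin n) (u : Fin m → ℝ) (j : Fin n)
    (hj : ∀ l, e l ≠ j) : patch y e u j = y j := by
  have h : ¬ ∃ l, e l = j := by push_neg; exact hj
  simp [patch, h]

lemma sum_pow_patch {n m : ℕ} (y : Fin n → ℝ) {e : Fin m → Fin n} (he : Function.Injective e)
    (u : Fin m → ℝ) (p : ℕ) :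
    ∑ j, patch y e u j ^ p = ∑ j, y j ^ p - ∑ l, y (e l) ^ p + ∑ l, u l ^ p := by
  classical
  have hsplit : ∀ z : Fin n → ℝ, ∑ j, z j ^ p
      = ∑ j ∈ Finset.univ \ Finset.image e Finset.univ, z j ^ p
        + ∑ j ∈ Finset.image e Finset.univ, z j ^ p := by
    intro z
    rw [Finset.sum_sdiff (Finset.subset_univ _)]
  have h1 : ∑ j ∈ Finset.image e Finset.univ, patch y e u j ^ p = ∑ l, u l ^ p := by
    rw [Finset.sum_image (fun a _ b _ h => he h)]
    exact Finset.sum_congr rfl fun l _ => by rw [patch_eq y he u l]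
  have h2 : ∑ j ∈ Finset.univ \ Finset.image e Finset.univ, patch y e u j ^ p
      = ∑ j ∈ Finset.univ \ Finset.image e Finset.univ, y j ^ p := by
    refine Finset.sum_congr rfl fun j hj => ?_
    have := patch_ne y e u j fun l hl =>
      (Finset.mem_sdiff.1 hj).2 (Finset.mem_image.2 ⟨l, Finset.mem_univ l, hl⟩)
    rw [this]
  have h3 : ∑ j ∈ Finset.image e Finset.univ, y j ^ p = ∑ l, y (e l) ^ p := by
    rw [Finset.sum_image (fun a _ b _ h => he h)]
  have e1 := hsplit (patch y e u)
  have e2 := hsplit y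
  rw [h1, h2] at e1
  rw [h3] at e2
  linarith

lemma exists_inj_range {m : ℕ} {V : Set ℝ} (hV : V.Finite) (h : m ≤ V.ncard) :
    ∃ b : Fin m → ℝ, Function.Injective b ∧ ∀ l, b l ∈ V := by
  classical
  have hcard : m ≤ hV.toFinset.card := by
    rwa [Set.ncard_eq_toFinset_card V hV] at h
  obtain ⟨t, hts, htc⟩ := Finset.exists_subset_card_eq hcard
  let eqv : t ≃ Fin m := t.equivFinOfCardEq htc
  refine ⟨fun l => (eqv.symm l : ℝ), ?_, ?_⟩
  · intro l l' hll
    have : eqv.symm l = eqv.symm l' := Subtype.ext hll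
    simpa using congrArg eqv this
  · intro l
    have : ((eqv.symm l : ℝ)) ∈ t := (eqv.symm l).2
    exact hV.mem_toFinset.1 (hts this)

lemma key_opt {n k : ℕ} (hk1 : 1 ≤ k) (y : Fin n → ℝ) (hy : ∀ j, 0 ≤ y j) :
    ∃ z : Fin n → ℝ, (∀ j, 0 ≤ z j) ∧
      (∀ p : ℕ, 1 ≤ p → p ≤ k → ∑ j, z j ^ p = ∑ j, y j ^ p) ∧
      (z '' {j | z j ≠ 0}).ncard ≤ k ∧
      ((∃ j, z j = 0) → (z '' {j | z j ≠ 0}).ncard ≤ k - 1) := by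
  classical
  set K : Set (Fin n → ℝ) :=
    {z | (∀ j, 0 ≤ z j) ∧ ∀ p : ℕ, 1 ≤ p → p ≤ k → ∑ j, z j ^ p = ∑ j, y j ^ p} with hK
  have hyK : y ∈ K := ⟨hy, fun _ _ _ => rfl⟩
  -- K is closed
  have hclosed : IsClosed K := by
    have h1 : IsClosed {z : Fin n → ℝ | ∀ j, 0 ≤ z j} := by
      have : {z : Fin n → ℝ | ∀ j, 0 ≤ z j} = ⋂ j, {z : Fin n → ℝ | 0 ≤ z j} := by
        ext z; simp
      rw [this]
      exact isClosed_iInter fun j => isClosed_le continuous_const (continuous_apply j)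
    have h2 : IsClosed {z : Fin n → ℝ | ∀ p : ℕ, 1 ≤ p → p ≤ k →
        ∑ j, z j ^ p = ∑ j, y j ^ p} := by
      have : {z : Fin n → ℝ | ∀ p : ℕ, 1 ≤ p → p ≤ k → ∑ j, z j ^ p = ∑ j, y j ^ p}
          = ⋂ (p : ℕ), ⋂ (_ : 1 ≤ p), ⋂ (_ : p ≤ k),
              {z : Fin n → ℝ | ∑ j, z j ^ p = ∑ j, y j ^ p} := by
        ext z; simp
      rw [this]
      refine isClosed_iInter fun p => isClosed_iInter fun _ => isClosed_iInter fun _ =>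
        isClosed_eq ?_ continuous_const
      exact continuous_finset_sum _ fun j _ => (continuous_apply j).pow p
    exact h1.inter h2
  -- K is contained in a compact box
  have hbdd : K ⊆ Set.pi Set.univ (fun _ : Fin n => Set.Icc (0 : ℝ) (∑ j, y j)) := by
    intro z hz
    obtain ⟨hz0, hzs⟩ := hz
    intro j _
    refine ⟨hz0 j, ?_⟩
    have hsum : ∑ j', z j' = ∑ j', y j' := by
      have := hzs 1 le_rfl hk1
      simpa using this
    have hle : z j ≤ ∑ j', z j' :=
      Finset.single_le_sum (fun j' _ => hz0 j') (Finset.mem_univ j)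
    rw [hsum] at hle
    exact hle
  have hcompact : IsCompact K :=
    (isCompact_univ_pi fun _ => isCompact_Icc).of_isClosed_subset hclosed hbdd
  -- objective function
  set φ : (Fin n → ℝ) → ℝ := fun z => (-1 : ℝ) ^ (k + 1) * ∑ j, z j ^ (k + 1) with hφ
  have hφcont : Continuous φ :=
    continuous_const.mul (continuous_finset_sum _ fun j _ => (continuous_apply j).pow (k + 1))
  obtain ⟨z, hzK, hzmin⟩ := hcompact.exists_isMinOn ⟨y, hyK⟩ hφcont.continuousOn
  obtain ⟨hz0, hzsum⟩ := hzK
  set V : Set ℝ := z '' {j | z j ≠ 0} with hV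
  have hVfin : V.Finite := (Set.toFinite _).image _
  -- helper to derive contradictions from perturbations of (k+1) coordinates
  have hperturb : ∀ e : Fin (k + 1) → Fin n, Function.Injective e →
      ∀ u : Fin (k + 1) → ℝ, (∀ l, 0 < u l) →
      (∀ p : ℕ, 1 ≤ p → p ≤ k → ∑ l, u l ^ p = ∑ l, z (e l) ^ p) →
      ((-1 : ℝ) ^ (k + 1) * ∑ l, u l ^ (k + 1)
        < (-1 : ℝ) ^ (k + 1) * ∑ l, z (e l) ^ (k + 1)) → False := by
    intro e he u hupos husum huobj
    set z' := patch z e u with hz'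
    have hz'K : z' ∈ K := by
      constructor
      · intro j
        by_cases h : ∃ l, e l = j
        · obtain ⟨l, rfl⟩ := h
          rw [hz', patch_eq z he u l]
          exact (hupos l).le
        · push_neg at h
          rw [hz', patch_ne z e u j h]
          exact hz0 j
      · intro p hp1 hpk
        rw [hz', sum_pow_patch z he u p, husum p hp1 hpk, hzsum p hp1 hpk]
        ring
    have hlt : φ z' < φ z := by
      have hexp : φ z' = φ z + ((-1 : ℝ) ^ (k + 1) * ∑ l, u l ^ (k + 1)
          - (-1 : ℝ) ^ (k + 1) * ∑ l, z (e l) ^ (k + 1)) := by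
        rw [hφ]
        simp only [hz']
        rw [sum_pow_patch z he u (k + 1)]
        ring
      rw [hexp]
      linarith
    exact absurd (hzmin hz'K) (not_le.2 hlt)
  -- Claim 1 : at most k distinct nonzero values
  have hclaim1 : V.ncard ≤ k := by
    by_contra hgt
    push_neg at hgt
    have hk1' : k + 1 ≤ V.ncard := hgt
    obtain ⟨b, hbinj, hbmem⟩ := exists_inj_range hVfin hk1'
    have hrep : ∀ l : Fin (k + 1), ∃ j, z j ≠ 0 ∧ z j = b l := by
      intro l
      obtain ⟨j, hj1, hj2⟩ := hbmem l
      exact ⟨j, hj1, hj2⟩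
    choose e he1 he2 using hrep
    have heinj : Function.Injective e := by
      intro l l' h
      apply hbinj
      rw [← he2 l, ← he2 l', h]
    have hapos : ∀ l, 0 < z (e l) := fun l => lt_of_le_of_ne (hz0 (e l)) (Ne.symm (he1 l))
    have hainj : Function.Injective (fun l => z (e l)) := by
      intro l l' h
      apply hbinj
      rw [← he2 l, ← he2 l']
      exact h
    obtain ⟨u, hupos, husum, huobj⟩ := perturbA (fun l => z (e l)) hainj hapos
    refine hperturb e heinj u hupos ?_ huobj
    intro p hp1 hpk
    have hplt : p - 1 < k := by omega
    have := husum ⟨p - 1, by omega⟩ (by simpa using hplt)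
    simpa [show p - 1 + 1 = p by omega] using this
  -- Claim 2 : if there is a zero coordinate, at most k - 1 distinct nonzero values
  have hclaim2 : (∃ j, z j = 0) → V.ncard ≤ k - 1 := by
    rintro ⟨j₀, hj₀⟩
    by_contra hgt
    push_neg at hgt
    have hk2' : k ≤ V.ncard := by omega
    obtain ⟨b, hbinj, hbmem⟩ := exists_inj_range hVfin hk2'
    have hrep : ∀ l : Fin k, ∃ j, z j ≠ 0 ∧ z j = b l := by
      intro l
      obtain ⟨j, hj1, hj2⟩ := hbmem l
      exact ⟨j, hj1, hj2⟩
    choose e' he1 he2 using hrep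
    have he'inj : Function.Injective e' := by
      intro l l' h
      apply hbinj
      rw [← he2 l, ← he2 l', h]
    have hane : ∀ l, e' l ≠ j₀ := by
      intro l h
      exact he1 l (by rw [h]; exact hj₀)
    set e : Fin (k + 1) → Fin n := Fin.cons j₀ e' with he
    have heinj : Function.Injective e := by
      rw [he, Fin.cons_injective_iff]
      constructor
      · rintro ⟨l, hl⟩
        exact hane l hl
      · exact he'inj
    have hainj : Function.Injective (fun l => z (e' l)) := by
      intro l l' h
      apply hbinj
      rw [← he2 l, ← he2 l']
      exact h
    have hapos : ∀ l, 0 < z (e' l) := fun l => lt_of_le_of_ne (hz0 (e' l)) (Ne.symm (he1 l))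
    obtain ⟨u, hupos, husum, huobj⟩ := perturbB hk1 (fun l => z (e' l)) hainj hapos
    have hze : (Fin.cons 0 (fun l => z (e' l)) : Fin (k + 1) → ℝ) = fun l => z (e l) := by
      funext l
      refine Fin.cases ?_ ?_ l
      · simp [he, hj₀]
      · intro i
        simp [he]
    rw [hze] at husum huobj
    exact hperturb e heinj u hupos husum huobj
  exact ⟨z, hz0, hzsum, hclaim1, hclaim2⟩

end Aux

/-- Membership in the stratum `H_k(Dₙ)` of the reflection arrangement of `Dₙ`:
either `x` has exactly one zero coordinate and its nonzero coordinates take at most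
`k-1` distinct absolute values, or `x` does not have exactly one zero coordinate
and its nonzero coordinates take at most `k` distinct absolute values. -/
def memStratumDn {n : ℕ} (k : ℕ) (x : Fin n → ℝ) : Prop :=
  ({i | x i = 0}.ncard = 1 ∧ ((fun i => |x i|) '' {i | x i ≠ 0}).ncard ≤ k - 1) ∨
  ({i | x i = 0}.ncard ≠ 1 ∧ ((fun i => |x i|) '' {i | x i ≠ 0}).ncard ≤ k)

/-- Corollary 2.6: for `1 ≤ k ≤ n-2`, every nonempty `Bₙ`-invariant `k`-sparse real
variety (defined by polynomials in the even power sums `s₂, …, s_{2k}`) meets the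
finer stratum `H_k(Dₙ)`. -/
theorem Bn_sparse_meets_Dn_stratum
    (n : ℕ) (hn : 3 ≤ n) (k : ℕ) (hk1 : 1 ≤ k) (hkn : k ≤ n - 2)
    (m : ℕ) (f : Fin m → MvPolynomial (Fin n) ℝ)
    (hf : ∀ j, f j ∈ Algebra.adjoin ℝ
      {p : MvPolynomial (Fin n) ℝ | ∃ i, 1 ≤ i ∧ i ≤ k ∧ p = psum (Fin n) ℝ (2 * i)})
    (hX : ∃ x : Fin n → ℝ, ∀ j, eval x (f j) = 0) :
    ∃ x : Fin n → ℝ, (∀ j, eval x (f j) = 0) ∧ memStratumDn k x := by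
  classical
  obtain ⟨x, hx⟩ := hX
  set y : Fin n → ℝ := fun j => x j ^ 2 with hy
  have hynn : ∀ j, 0 ≤ y j := fun j => sq_nonneg _
  obtain ⟨z, hznn, hzsum, hzcard, hzzero⟩ := key_opt hk1 y hynn
  set x' : Fin n → ℝ := fun j => Real.sqrt (z j) with hx'
  have hx'sq : ∀ j, x' j ^ 2 = z j := fun j => Real.sq_sqrt (hznn j)
  -- power sums of x' agree with those of x
  have hps : ∀ i : ℕ, 1 ≤ i → i ≤ k →
      eval x' (psum (Fin n) ℝ (2 * i)) = eval x (psum (Fin n) ℝ (2 * i)) := by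
    intro i hi1 hik
    have h1 : eval x' (psum (Fin n) ℝ (2 * i)) = ∑ j, x' j ^ (2 * i) := by
      simp [psum]
    have h2 : eval x (psum (Fin n) ℝ (2 * i)) = ∑ j, x j ^ (2 * i) := by
      simp [psum]
    rw [h1, h2]
    have h3 : ∀ j, x' j ^ (2 * i) = z j ^ i := by
      intro j
      rw [pow_mul, hx'sq]
    have h4 : ∀ j, x j ^ (2 * i) = y j ^ i := by
      intro j
      rw [pow_mul]
    simp only [h3, h4]
    exact hzsum i hi1 hik
  -- evaluations of the defining polynomials agree
  have hfeq : ∀ j, eval x' (f j) = eval x (f j) := by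
    intro j
    have hsub : Algebra.adjoin ℝ
        {p : MvPolynomial (Fin n) ℝ | ∃ i, 1 ≤ i ∧ i ≤ k ∧ p = psum (Fin n) ℝ (2 * i)}
        ≤ AlgHom.equalizer (MvPolynomial.aeval x') (MvPolynomial.aeval x) := by
      apply Algebra.adjoin_le
      rintro p ⟨i, hi1, hik, rfl⟩
      show (MvPolynomial.aeval x') _ = (MvPolynomial.aeval x) _
      have ha1 : (MvPolynomial.aeval x') (psum (Fin n) ℝ (2 * i))
          = eval x' (psum (Fin n) ℝ (2 * i)) := by
        rw [← MvPolynomial.coe_aeval_eq_eval]; rfl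
      have ha2 : (MvPolynomial.aeval x) (psum (Fin n) ℝ (2 * i))
          = eval x (psum (Fin n) ℝ (2 * i)) := by
        rw [← MvPolynomial.coe_aeval_eq_eval]; rfl
      rw [ha1, ha2]
      exact hps i hi1 hik
    have hmem := hsub (hf j)
    have : (MvPolynomial.aeval x') (f j) = (MvPolynomial.aeval x) (f j) := hmem
    rwa [show (MvPolynomial.aeval x') (f j) = eval x' (f j) by
        rw [← MvPolynomial.coe_aeval_eq_eval]; rfl,
      show (MvPolynomial.aeval x) (f j) = eval x (f j) by
        rw [← MvPolynomial.coe_aeval_eq_eval]; rfl] at this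
  -- x' is in the variety
  have hx'X : ∀ j, eval x' (f j) = 0 := fun j => (hfeq j).trans (hx j)
  -- set identifications
  have hzeroset : {i | x' i = 0} = {i | z i = 0} := by
    ext i
    simp only [Set.mem_setOf_eq, hx']
    constructor
    · intro h
      have := Real.sqrt_eq_zero'.1 h
      exact le_antisymm this (hznn i)
    · intro h
      rw [h, Real.sqrt_zero]
  have hnzset : {i | x' i ≠ 0} = {i | z i ≠ 0} := by
    ext i
    simp only [Set.mem_setOf_eq]
    constructor
    · intro h hc
      apply h
      show Real.sqrt (z i) = 0
      rw [hc, Real.sqrt_zero]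
    · intro h hc
      have h2 : i ∈ {i | z i = 0} := by rw [← hzeroset]; exact hc
      exact h h2
  have himg : ((fun i => |x' i|) '' {i | x' i ≠ 0}).ncard
      ≤ (z '' {i | z i ≠ 0}).ncard := by
    have habs : ∀ i, |x' i| = Real.sqrt (z i) := by
      intro i
      rw [abs_of_nonneg (Real.sqrt_nonneg _)]
    have himg1 : (fun i => |x' i|) '' {i | x' i ≠ 0}
        = Real.sqrt '' (z '' {i | z i ≠ 0}) := by
      rw [hnzset, ← Set.image_comp]
      refine Set.image_congr fun i _ => habs i
    rw [himg1]
    exact Set.ncard_image_le ((Set.toFinite _).image _)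
  -- conclude
  refine ⟨x', hx'X, ?_⟩
  by_cases hone : {i | z i = 0}.ncard = 1
  · left
    constructor
    · rw [hzeroset]; exact hone
    · have hex : ∃ j, z j = 0 := by
        have hne : {i | z i = 0}.Nonempty := by
          rw [← Set.ncard_pos (Set.toFinite _)] at *
          omega
        exact hne
      exact le_trans himg (hzzero hex)
  · right
    constructor
    · rw [hzeroset]; exact hone
    · exact le_trans himg hzcard
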